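/- Under the hypotheses of the quantitative core of Proposition 1 — g_𝓘(x) = 0, ‖B_𝓘 u‖ ≤ λ‖u‖ for all u ∈ ℂ^U, z = x′ − x, g′ = g_𝓘(x′), τ > 0, and additionally a random-walk step size γ > 0 — the unnormalized Gaussian proposal density ratio satisfies exp(−K‖z‖²/γ²) ≤ exp(−‖τ g′ − z‖²/γ²) / exp(−‖z‖²/γ²) ≤ exp(K‖z‖²/γ²), where K = τ²λ² + 2τλ. -/

import Mathlib

set_option maxHeartbeats 800000


open Matrix

/-- The mini-batch gradient map `g_𝓘(x) = s ∑_{c∈𝓘} H_cᴴ (H_c x − y_c)`, with scaling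
factor `s = C/m`. -/
noncomputable def miniBatchGrad {ι : Type*} [Fintype ι] {U : ℕ} {Bsz : ι → ℕ}
    (H : (c : ι) → Matrix (Fin (Bsz c)) (Fin U) ℂ) (y : (c : ι) → Fin (Bsz c) → ℂ)
    (s : ℝ) (x : Fin U → ℂ) : Fin U → ℂ :=
  (s : ℂ) • ∑ c, (H c)ᴴ *ᵥ ((H c) *ᵥ x - y c)

/-- The mini-batch Hessian `B_𝓘 = s ∑_{c∈𝓘} H_cᴴ H_c`, with scaling factor `s = C/m`. -/
noncomputable def miniBatchHessian {ι : Type*} [Fintype ι] {U : ℕ} {Bsz : ι → ℕ}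
    (H : (c : ι) → Matrix (Fin (Bsz c)) (Fin U) ℂ) (s : ℝ) :
    Matrix (Fin U) (Fin U) ℂ :=
  (s : ℂ) • ∑ c, (H c)ᴴ * (H c)

private lemma sum_mulVec' {ι n m : Type*} [Fintype ι] [Fintype m]
    (M : ι → Matrix n m ℂ) (v : m → ℂ) :
    (∑ c, M c) *ᵥ v = ∑ c, M c *ᵥ v := by
  ext i
  simp only [Matrix.mulVec, dotProduct, Matrix.sum_apply, Finset.sum_apply,
    Finset.sum_mul]
  exact Finset.sum_comm

/-- Under the hypotheses of the quantitative core of Proposition 1 and a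
random-walk step size `γ > 0`, the unnormalized Gaussian proposal density ratio satisfies
`exp(−K‖z‖²/γ²) ≤ exp(−‖τg′ − z‖²/γ²) / exp(−‖z‖²/γ²) ≤ exp(K‖z‖²/γ²)` with
`K = τ²λ² + 2τλ`. -/
theorem minibatch_proposal_ratio_bounds {ι : Type*} [Fintype ι] (U : ℕ) (Bsz : ι → ℕ)
    (H : (c : ι) → Matrix (Fin (Bsz c)) (Fin U) ℂ) (y : (c : ι) → Fin (Bsz c) → ℂ)
    (s : ℝ) (hs : 0 < s) (lam : ℝ) (hlam : 0 < lam) (τ : ℝ) (hτ : 0 < τ)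
    (γ : ℝ) (hγ : 0 < γ)
    (hB : ∀ u : Fin U → ℂ,
        Real.sqrt (∑ i, ‖((miniBatchHessian H s) *ᵥ u) i‖ ^ 2)
          ≤ lam * Real.sqrt (∑ i, ‖u i‖ ^ 2))
    (x x' : Fin U → ℂ) (hg : miniBatchGrad H y s x = 0)
    (z g' : Fin U → ℂ) (hz : z = x' - x) (hg' : g' = miniBatchGrad H y s x')
    (K : ℝ) (hK : K = τ ^ 2 * lam ^ 2 + 2 * τ * lam) :
    Real.exp (-(K * ∑ i, ‖z i‖ ^ 2) / γ ^ 2)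
        ≤ Real.exp (-(∑ i, ‖(τ : ℂ) * g' i - z i‖ ^ 2) / γ ^ 2) /
            Real.exp (-(∑ i, ‖z i‖ ^ 2) / γ ^ 2) ∧
    Real.exp (-(∑ i, ‖(τ : ℂ) * g' i - z i‖ ^ 2) / γ ^ 2) /
            Real.exp (-(∑ i, ‖z i‖ ^ 2) / γ ^ 2)
        ≤ Real.exp ((K * ∑ i, ‖z i‖ ^ 2) / γ ^ 2) := by

  have hgdiff : g' = (miniBatchHessian H s) *ᵥ z := by
    rw [hg', hz]
    have h1 : miniBatchGrad H y s x' = miniBatchGrad H y s x' - miniBatchGrad H y s x := by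
      rw [hg, sub_zero]
    rw [h1]
    simp only [miniBatchGrad, miniBatchHessian, ← smul_sub, ← Finset.sum_sub_distrib,
      Matrix.smul_mulVec, sum_mulVec', ← Matrix.mulVec_mulVec, Matrix.mulVec_sub,
      sub_sub_sub_cancel_right]
  set Z : EuclideanSpace ℂ (Fin U) := WithLp.toLp 2 z with hZ
  set G : EuclideanSpace ℂ (Fin U) := WithLp.toLp 2 g' with hG
  have hnormsq : ∀ v : EuclideanSpace ℂ (Fin U), ∑ i, ‖v i‖ ^ 2 = ‖v‖ ^ 2 := by
    intro v
    rw [EuclideanSpace.norm_eq, Real.sq_sqrt]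
    positivity
  have hGle : ‖G‖ ≤ lam * ‖Z‖ := by
    have h := hB z
    rw [← hgdiff] at h
    rw [EuclideanSpace.norm_eq, EuclideanSpace.norm_eq]
    exact h
  set W : EuclideanSpace ℂ (Fin U) := (τ : ℂ) • G - Z with hW
  have hWi : ∀ i, W i = (τ : ℂ) * g' i - z i := by
    intro i; simp [hW, hG, hZ]
  have hM : (∑ i, ‖(τ : ℂ) * g' i - z i‖ ^ 2) = ‖W‖ ^ 2 := by
    rw [← hnormsq W]
    exact Finset.sum_congr rfl fun i _ => by rw [hWi i]
  have hN : (∑ i, ‖z i‖ ^ 2) = ‖Z‖ ^ 2 := hnormsq Z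
  have hτG : ‖(τ : ℂ) • G‖ ≤ τ * lam * ‖Z‖ := by
    rw [norm_smul]
    simp only [Complex.norm_real, Real.norm_eq_abs, abs_of_pos hτ]
    calc τ * ‖G‖ ≤ τ * (lam * ‖Z‖) := mul_le_mul_of_nonneg_left hGle hτ.le
      _ = τ * lam * ‖Z‖ := by ring
  have hWZ : ‖Z‖ ≤ ‖W‖ + ‖(τ : ℂ) • G‖ := by
    have h := norm_sub_le W ((τ : ℂ) • G)
    simp only [hW, sub_sub_cancel_left, norm_neg] at h
    linarith
  have hWtri : ‖W‖ ≤ ‖(τ : ℂ) • G‖ + ‖Z‖ := norm_sub_le _ _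
  clear_value W
  clear_value Z G
  have hZnn := norm_nonneg Z
  have hWnn := norm_nonneg W
  have hWup : ‖W‖ ^ 2 ≤ (1 + K) * ‖Z‖ ^ 2 := by
    have h2 : ‖W‖ ≤ (1 + τ * lam) * ‖Z‖ := by nlinarith
    nlinarith
  have hWlo : (1 - K) * ‖Z‖ ^ 2 ≤ ‖W‖ ^ 2 := by
    rcases le_or_gt (τ * lam) 1 with h | h
    · have h2 : (1 - τ * lam) * ‖Z‖ ≤ ‖W‖ := by nlinarith
      nlinarith [sq_nonneg (τ * lam * ‖Z‖)]
    · have h3 : 1 - K ≤ 0 := by nlinarith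
      nlinarith
  have hM2 : (∑ i, ‖(τ : ℂ) * G i - Z i‖ ^ 2) = ‖W‖ ^ 2 := by
    rw [← hnormsq W]
    refine Finset.sum_congr rfl fun i _ => ?_
    congr 1
    rw [hW]
    simp
  rw [hM, hN, ← Real.exp_sub]
  have heq : -‖W‖ ^ 2 / γ ^ 2 - -‖Z‖ ^ 2 / γ ^ 2 = (‖Z‖ ^ 2 - ‖W‖ ^ 2) / γ ^ 2 := by ring
  rw [heq]
  have hγ2 : (0:ℝ) < γ ^ 2 := by positivity
  constructor
  · apply Real.exp_le_exp.mpr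
    rw [div_le_div_iff_of_pos_right hγ2]
    nlinarith
  · apply Real.exp_le_exp.mpr
    rw [div_le_div_iff_of_pos_right hγ2]
    nlinarith
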